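/- For real numbers 0 < r < s < 1, the real number (r+s)/(1 + rs + √((1−r²)(1−s²))) is the hyperbolic midpoint of the segment [r,s] in the unit disk: it lies strictly between r and s, and its hyperbolic distance to r equals its hyperbolic distance to s, where the hyperbolic distance ρ between two points x < y in (−1,1) satisfies sinh(ρ/2) = (y−x)/√((1−x²)(1−y²)). -/

import Mathlib

theorem hyperbolic_midpoint_radial (r s : ℝ) (h0r : 0 < r) (hrs : r < s) (hs1 : s < 1) :
    let x : ℝ := (r + s) / (1 + r * s + Real.sqrt ((1 - r ^ 2) * (1 - s ^ 2)))
    r < x ∧ x < s ∧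
      (x - r) / Real.sqrt ((1 - r ^ 2) * (1 - x ^ 2)) =
        (s - x) / Real.sqrt ((1 - x ^ 2) * (1 - s ^ 2)) := by
  intro x
  have hr1 : r < 1 := hrs.trans hs1
  have hs0 : 0 < s := h0r.trans hrs
  set a := Real.sqrt (1 - r ^ 2) with ha
  set b := Real.sqrt (1 - s ^ 2) with hb
  have har : (0:ℝ) < 1 - r ^ 2 := by nlinarith
  have hbs : (0:ℝ) < 1 - s ^ 2 := by nlinarith
  have ha0 : 0 < a := Real.sqrt_pos.mpr har
  have hb0 : 0 < b := Real.sqrt_pos.mpr hbs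
  have ha2 : a ^ 2 = 1 - r ^ 2 := Real.sq_sqrt har.le
  have hb2 : b ^ 2 = 1 - s ^ 2 := Real.sq_sqrt hbs.le
  have hab : Real.sqrt ((1 - r ^ 2) * (1 - s ^ 2)) = a * b := Real.sqrt_mul har.le _
  have hD : 0 < 1 + r * s + a * b := by positivity
  have hx : x = (r + s) / (1 + r * s + a * b) := by
    show (r + s) / (1 + r * s + Real.sqrt ((1 - r ^ 2) * (1 - s ^ 2))) = _
    rw [hab]
  have habsq : (a * b) ^ 2 = (1 - r ^ 2) * (1 - s ^ 2) := by rw [mul_pow, ha2, hb2]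
  have habl : a * b < 1 - r * s := by nlinarith [mul_pos ha0 hb0, sq_nonneg (r - s)]
  have hsa : r * b < s * a := by nlinarith [mul_pos ha0 hb0, mul_pos hs0 ha0, mul_pos h0r hb0]
  have h1 : r < x := by
    rw [hx, lt_div_iff₀ hD]; nlinarith
  have h2 : x < s := by
    rw [hx, div_lt_iff₀ hD]; nlinarith
  have hx1 : x < 1 := h2.trans hs1
  have hx0 : 0 < x := h0r.trans h1
  have hcx : (0:ℝ) < 1 - x ^ 2 := by nlinarith
  set c := Real.sqrt (1 - x ^ 2) with hc
  have hc0 : 0 < c := Real.sqrt_pos.mpr hcx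
  have hc2 : c ^ 2 = 1 - x ^ 2 := Real.sq_sqrt hcx.le
  have hrx : Real.sqrt ((1 - r ^ 2) * (1 - x ^ 2)) = a * c := Real.sqrt_mul har.le _
  have hxs : Real.sqrt ((1 - x ^ 2) * (1 - s ^ 2)) = c * b := Real.sqrt_mul hcx.le _
  have hxr : x - r = a * (s * a - r * b) / (1 + r * s + a * b) := by
    rw [hx, div_sub' hD.ne', div_eq_div_iff hD.ne' hD.ne']
    linear_combination (-s) * (1 + r * s + a * b) * ha2
  have hsx : s - x = b * (s * a - r * b) / (1 + r * s + a * b) := by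
    rw [hx, sub_div' hD.ne', div_eq_div_iff hD.ne' hD.ne']
    linear_combination r * (1 + r * s + a * b) * hb2
  have key : (x - r) * b = (s - x) * a := by rw [hxr, hsx]; ring
  refine ⟨h1, h2, ?_⟩
  rw [hrx, hxs, div_eq_div_iff (by positivity) (by positivity)]
  linear_combination c * key
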